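/- arXiv:1908.10429 — 4 statements merged into one kernel-verified Lean document; each statement's English description precedes it below -/
import Mathlib

section
/- Let Γ be a group and Δ a normal subgroup of finite index. Let k be an algebraically closed field of characteristic zero, V a nonzero finite-dimensional k-vector space, and r₁, r₂ : Γ →* GL(V) group homomorphisms. Let χ : Δ →* kˣ be a character such that r₁(h) = χ(h) • r₂(h) for all h ∈ Δ. Assume that for every finite-index subgroup Δ' of Γ, the restriction of r₁ to Δ' is irreducible. Then there exists a character χ' : Γ →* kˣ with χ'(h) = χ(h) for all h ∈ Δ and r₁(g) = χ'(g) • r₂(g) for all g ∈ Γ. -/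
/-- Lemma 5.3 (lem_twists): if `r₁` and `r₂` agree up to a character twist `χ` on a
finite-index normal subgroup `Δ`, and `r₁` is irreducible on every finite-index
subgroup, then `χ` extends to a character `χ'` of `Γ` with `r₁ = r₂ ⊗ χ'`. -/
theorem twist_extends
    {k : Type*} [Field k] [IsAlgClosed k] [CharZero k]
    {V : Type*} [AddCommGroup V] [Module k V] [FiniteDimensional k V] [Nontrivial V]
    {Γ : Type*} [Group Γ] (Δ : Subgroup Γ) [Δ.Normal] [Δ.FiniteIndex]
    (r₁ r₂ : Γ →* (Module.End k V)ˣ) (χ : Δ →* kˣ)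
    (hχ : ∀ h : Δ, (r₁ (h : Γ) : Module.End k V) = (χ h : k) • (r₂ (h : Γ) : Module.End k V))
    (hirr : ∀ Δ' : Subgroup Γ, Δ'.FiniteIndex →
      ∀ W : Submodule k V,
        (∀ g ∈ Δ', ∀ v ∈ W, (r₁ g : Module.End k V) v ∈ W) → W = ⊥ ∨ W = ⊤) :
    ∃ χ' : Γ →* kˣ, (∀ h : Δ, χ' (h : Γ) = χ h) ∧
      ∀ g : Γ, (r₁ g : Module.End k V) = (χ' g : k) • (r₂ g : Module.End k V) := by
  classical
  set E := Module.End k V with hE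
  -- the scalar units
  set ι : kˣ →* Eˣ := Units.map (algebraMap k E).toMonoidHom with hι
  have ιval : ∀ c : kˣ, ((ι c : Eˣ) : E) = algebraMap k E (c : k) := fun c => rfl
  have ι_comm : ∀ (c : kˣ) (A : Eˣ), ι c * A = A * ι c := by
    intro c A
    apply Units.ext
    rw [Units.val_mul, Units.val_mul, ιval]
    exact Algebra.commutes (c : k) (A : E)
  have ι_inj : Function.Injective ι := by
    intro a b hab
    have : algebraMap k E (a : k) = algebraMap k E (b : k) := congrArg Units.val hab
    exact Units.ext ((algebraMap k E).injective this)
  -- hχ as an equation of units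
  have hu : ∀ h : Δ, r₁ (h : Γ) = ι (χ h) * r₂ (h : Γ) := by
    intro h
    apply Units.ext
    rw [Units.val_mul, ιval, ← Algebra.smul_def]
    exact hχ h
  -- Schur: anything commuting with r₁ on a finite-index subgroup is scalar
  have schur : ∀ (Δ' : Subgroup Γ), Δ'.FiniteIndex → ∀ S : Eˣ,
      (∀ x ∈ Δ', (S : E) * (r₁ x : E) = (r₁ x : E) * (S : E)) → ∃ c : kˣ, S = ι c := by
    intro Δ' hΔ' S hS
    obtain ⟨c, hc⟩ := Module.End.exists_eigenvalue (S : E)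
    set W := Module.End.eigenspace (S : E) c with hW
    have hWne : W ≠ ⊥ := hc
    have hinv : ∀ x ∈ Δ', ∀ v ∈ W, (r₁ x : E) v ∈ W := by
      intro x hx v hv
      rw [hW, Module.End.mem_eigenspace_iff] at hv ⊢
      calc (S : E) ((r₁ x : E) v) = (r₁ x : E) ((S : E) v) := by
              rw [← Module.End.mul_apply, hS x hx, Module.End.mul_apply]
        _ = (r₁ x : E) (c • v) := by rw [hv]
        _ = c • (r₁ x : E) v := map_smul _ _ _
    have hWtop : W = ⊤ := (hirr Δ' hΔ' W hinv).resolve_left hWne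
    have hSc : (S : E) = algebraMap k E c := by
      apply LinearMap.ext
      intro v
      have hv : v ∈ W := hWtop ▸ Submodule.mem_top
      rw [hW, Module.End.mem_eigenspace_iff] at hv
      rw [hv]; exact (Module.algebraMap_end_apply ..).symm
    have hc0 : c ≠ 0 := by
      rintro rfl
      obtain ⟨v, hv⟩ := exists_ne (0 : V)
      apply hv
      have : (S : E) v = 0 := by rw [hSc, map_zero]; exact LinearMap.zero_apply v
      calc v = ((S⁻¹ : Eˣ) : E) ((S : E) v) := by
              rw [← Module.End.mul_apply, ← Units.val_mul, inv_mul_cancel]; rfl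
        _ = 0 := by rw [this]; simp
    exact ⟨Units.mk0 c hc0, Units.ext (by rw [ιval, Units.val_mk0]; exact hSc)⟩
  -- dimension
  set n := Module.finrank k V with hn
  have hn0 : n ≠ 0 := Module.finrank_pos.ne'
  -- determinant character
  set D : Eˣ →* kˣ := Units.map (LinearMap.det : (V →ₗ[k] V) →* k) with hD
  have hDι : ∀ c : kˣ, D (ι c) = c ^ n := by
    intro c
    apply Units.ext
    show LinearMap.det (algebraMap k E (c : k)) = (c : k) ^ n
    rw [Module.algebraMap_end_eq_smul_id, LinearMap.det_smul, LinearMap.det_id, mul_one]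
  have hχn : ∀ h : Δ, (χ h) ^ n = D (r₁ (h : Γ)) * (D (r₂ (h : Γ)))⁻¹ := by
    intro h
    have := congrArg D (hu h)
    rw [map_mul, hDι] at this
    rw [this, mul_inv_cancel_right]
  -- key step: for each g, r₂(g)⁻¹ r₁(g) is scalar
  have key : ∀ g : Γ, ∃ c : kˣ, (r₂ g)⁻¹ * r₁ g = ι c := by
    intro g
    have hNorm : Δ.Normal := inferInstance
    -- conjugation by g on Δ
    set cm : Δ →* Δ := MonoidHom.mk'
        (fun h => ⟨g * (h : Γ) * g⁻¹, hNorm.conj_mem (h : Γ) h.2 g⟩)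
        (by intro a b; ext; simp [mul_assoc]) with hcm
    set ψ : Δ →* kˣ := (χ.comp cm) * χ⁻¹ with hψdef
    -- ψ takes values in n-th roots of unity
    have hψn : ∀ h : Δ, ψ h ^ n = 1 := by
      intro h
      have hconj : ∀ (r : Γ →* Eˣ), r ((cm h : Δ) : Γ) = r g * r (h : Γ) * (r g)⁻¹ := by
        intro r
        show r (g * (h : Γ) * g⁻¹) = _
        rw [map_mul, map_mul, map_inv]
      have hDconj : ∀ (r : Γ →* Eˣ), D (r ((cm h : Δ) : Γ)) = D (r (h : Γ)) := by
        intro r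
        rw [hconj r, map_mul, map_mul, map_inv, mul_comm (D (r g)), mul_assoc,
          mul_inv_cancel, mul_one]
      have : ψ h ^ n = (χ (cm h)) ^ n * ((χ h) ^ n)⁻¹ := by
        rw [hψdef]
        simp [mul_pow, inv_pow]
      rw [this, hχn, hχn, hDconj r₁, hDconj r₂]
      group
    -- kernel of ψ has finite index
    have hrange : (ψ.range : Set kˣ).Finite := by
      have hsub : (ψ.range : Set kˣ) ⊆ (rootsOfUnity n k : Set kˣ) := by
        rintro x ⟨h, rfl⟩
        exact (mem_rootsOfUnity n _).mpr (hψn h)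
      haveI : NeZero n := ⟨hn0⟩
      haveI : Fintype (rootsOfUnity n k) := Fintype.ofFinite _
      exact Set.Finite.subset (Set.toFinite _) hsub
    have hker : ψ.ker.FiniteIndex := by
      constructor
      rw [Subgroup.index_ker]
      haveI : Finite ψ.range := hrange
      exact Nat.card_ne_zero.mpr ⟨⟨1, 1, map_one ψ⟩, inferInstance⟩
    set Δ' : Subgroup Γ := ψ.ker.map Δ.subtype with hΔ'
    have hΔ'fi : Δ'.FiniteIndex := by
      constructor
      rw [hΔ', Subgroup.index_map, Δ.subtype_range, Subgroup.ker_subtype, sup_bot_eq]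
      exact Nat.mul_ne_zero hker.index_ne_zero Subgroup.FiniteIndex.index_ne_zero
    -- commutation on Δ'
    refine schur Δ' hΔ'fi ((r₂ g)⁻¹ * r₁ g) ?_
    intro x hx
    rw [hΔ'] at hx
    obtain ⟨h, hh, rfl⟩ := hx
    have hχeq : χ (cm h) = χ h := by
      have : ψ h = 1 := hh
      rw [hψdef] at this
      simpa [mul_inv_eq_one] using this
    -- now a units computation
    have step : ((r₂ g)⁻¹ * r₁ g) * r₁ (h : Γ) = r₁ (h : Γ) * ((r₂ g)⁻¹ * r₁ g) := by
      have e1 : r₁ g * r₁ (h : Γ) = r₁ ((cm h : Δ) : Γ) * r₁ g := by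
        rw [← map_mul, ← map_mul]
        congr 1
        show g * (h : Γ) = (g * (h : Γ) * g⁻¹) * g
        group
      have e2 : r₁ ((cm h : Δ) : Γ) = ι (χ h) * (r₂ g * r₂ (h : Γ) * (r₂ g)⁻¹) := by
        rw [hu (cm h), hχeq]
        congr 1
        show r₂ (g * (h : Γ) * g⁻¹) = _
        rw [map_mul, map_mul, map_inv]
      calc ((r₂ g)⁻¹ * r₁ g) * r₁ (h : Γ)
          = (r₂ g)⁻¹ * r₁ ((cm h : Δ) : Γ) * r₁ g := by rw [mul_assoc, e1, ← mul_assoc]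
        _ = ((r₂ g)⁻¹ * ι (χ h)) * (r₂ g * r₂ (h : Γ) * (r₂ g)⁻¹) * r₁ g := by
            rw [e2]; group
        _ = (ι (χ h) * (r₂ g)⁻¹) * (r₂ g * r₂ (h : Γ) * (r₂ g)⁻¹) * r₁ g := by
            rw [← ι_comm]
        _ = (ι (χ h) * r₂ (h : Γ)) * ((r₂ g)⁻¹ * r₁ g) := by group
        _ = r₁ (h : Γ) * ((r₂ g)⁻¹ * r₁ g) := by rw [← hu h]
    simpa [Units.val_mul] using congrArg Units.val step
  -- assemble the character
  choose c hc using key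
  have hmul : ∀ a b : Γ, c (a * b) = c a * c b := by
    intro a b
    apply ι_inj
    rw [map_mul]
    calc ι (c (a * b)) = (r₂ (a * b))⁻¹ * r₁ (a * b) := (hc (a * b)).symm
      _ = (r₂ b)⁻¹ * ((r₂ a)⁻¹ * r₁ a) * r₁ b := by
          rw [map_mul, map_mul, mul_inv_rev]; group
      _ = (r₂ b)⁻¹ * ι (c a) * r₁ b := by rw [hc a]
      _ = ι (c a) * ((r₂ b)⁻¹ * r₁ b) := by rw [← ι_comm, mul_assoc]
      _ = ι (c a) * ι (c b) := by rw [hc b]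
  set χ' : Γ →* kˣ := MonoidHom.mk' c hmul with hχ'
  refine ⟨χ', ?_, ?_⟩
  · intro h
    apply ι_inj
    show ι (c (h : Γ)) = ι (χ h)
    rw [← hc (h : Γ), hu h, ← mul_assoc, ← ι_comm, mul_assoc, inv_mul_cancel, mul_one]
  · intro g
    have : r₁ g = r₂ g * ι (c g) := by
      rw [← hc g, ← mul_assoc, mul_inv_cancel, one_mul]
    have hval := congrArg Units.val this
    rw [Units.val_mul, ιval, ← Algebra.commutes, ← Algebra.smul_def] at hval
    exact hval
end

section
/- Let k be an algebraically closed field, G a group, V a nonzero finite-dimensional k-vector space, ρ : G →* GL(V) a group homomorphism, and η : G →* kˣ a character. Suppose there exists A ∈ GL(V) such that A ∘ ρ(g) ∘ A⁻¹ = η(g) • ρ(g) for all g ∈ G. If the restriction of ρ to the kernel of η is irreducible, then η is the trivial character, i.e. η(g) = 1 for all g ∈ G. -/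
private lemma endUnits_inv_apply {k V : Type*} [Field k] [AddCommGroup V] [Module k V]
    (u : (Module.End k V)ˣ) (x : V) :
    ((u⁻¹ : (Module.End k V)ˣ) : Module.End k V) ((u : Module.End k V) x) = x := by
  have h : ((u⁻¹ : (Module.End k V)ˣ) * u : (Module.End k V)ˣ) = 1 := inv_mul_cancel u
  calc ((u⁻¹ : (Module.End k V)ˣ) : Module.End k V) ((u : Module.End k V) x)
      = (((u⁻¹ * u : (Module.End k V)ˣ)) : Module.End k V) x := rfl
    _ = x := by rw [h]; rfl

private lemma endUnits_apply_inv {k V : Type*} [Field k] [AddCommGroup V] [Module k V]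
    (u : (Module.End k V)ˣ) (x : V) :
    (u : Module.End k V) (((u⁻¹ : (Module.End k V)ˣ) : Module.End k V) x) = x := by
  have h : (u * u⁻¹ : (Module.End k V)ˣ) = 1 := mul_inv_cancel u
  calc (u : Module.End k V) (((u⁻¹ : (Module.End k V)ˣ) : Module.End k V) x)
      = (((u * u⁻¹ : (Module.End k V)ˣ)) : Module.End k V) x := rfl
    _ = x := by rw [h]; rfl

private lemma endUnits_injective {k V : Type*} [Field k] [AddCommGroup V] [Module k V]
    (u : (Module.End k V)ˣ) : Function.Injective ((u : Module.End k V) : V → V) := by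
  intro x y hxy
  have := congrArg (((u⁻¹ : (Module.End k V)ˣ) : Module.End k V) : V → V) hxy
  simpa [endUnits_inv_apply] using this

/-- Second case of the proof of Lemma 5.3 (contrapositive form): if `ρ` is conjugate to
its twist `ρ ⊗ η` and the restriction of `ρ` to `ker η` is irreducible, then `η` is
trivial. -/
theorem twist_conjugate_irreducible_ker_char_trivial
    {k : Type*} [Field k] [IsAlgClosed k]
    {V : Type*} [AddCommGroup V] [Module k V] [FiniteDimensional k V] [Nontrivial V]
    {G : Type*} [Group G]
    (ρ : G →* (Module.End k V)ˣ) (η : G →* kˣ)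
    (A : (Module.End k V)ˣ)
    (hA : ∀ g : G,
      (A : Module.End k V) ∘ₗ (ρ g : Module.End k V) ∘ₗ ((A⁻¹ : (Module.End k V)ˣ) : Module.End k V)
        = (η g : k) • (ρ g : Module.End k V))
    (hirr : ∀ W : Submodule k V,
      (∀ g ∈ η.ker, ∀ v ∈ W, (ρ g : Module.End k V) v ∈ W) → W = ⊥ ∨ W = ⊤) :
    ∀ g : G, η g = 1 := by
  obtain ⟨c, hc⟩ := Module.End.exists_eigenvalue (A : Module.End k V)
  set W := Module.End.eigenspace (A : Module.End k V) c with hW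
  -- A commutes with ρ τ for τ ∈ ker η
  have hcomm : ∀ τ ∈ η.ker, ∀ v : V,
      (A : Module.End k V) ((ρ τ : Module.End k V) v)
        = (ρ τ : Module.End k V) ((A : Module.End k V) v) := by
    intro τ hτ v
    have h := hA τ
    rw [MonoidHom.mem_ker] at hτ
    rw [hτ] at h
    have h2 := congrArg (fun f : Module.End k V => f ((A : Module.End k V) v)) h
    simp only [LinearMap.comp_apply, Units.val_one, one_smul] at h2
    rwa [endUnits_inv_apply A v] at h2
  -- eigenspace is invariant
  have hWinv : ∀ g ∈ η.ker, ∀ v ∈ W, (ρ g : Module.End k V) v ∈ W := by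
    intro τ hτ v hv
    rw [hW, Module.End.mem_eigenspace_iff] at hv ⊢
    rw [hcomm τ hτ v, hv, map_smul]
  have hWtop : W = ⊤ := by
    rcases hirr W hWinv with h | h
    · exact absurd h hc
    · exact h
  -- so A = c • id
  have hAc : ∀ v : V, (A : Module.End k V) v = c • v := by
    intro v
    have : v ∈ W := hWtop ▸ Submodule.mem_top
    rwa [hW, Module.End.mem_eigenspace_iff] at this
  obtain ⟨v, hv⟩ := exists_ne (0 : V)
  have hc0 : c ≠ 0 := by
    intro h0
    apply hv
    apply endUnits_injective A
    rw [hAc, h0, zero_smul, map_zero]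
  intro g
  have hAinv : ((A⁻¹ : (Module.End k V)ˣ) : Module.End k V) v = c⁻¹ • v := by
    have h1 : (A : Module.End k V) (((A⁻¹ : (Module.End k V)ˣ) : Module.End k V) v) = v :=
      endUnits_apply_inv A v
    rw [hAc] at h1
    have h2 := congrArg (fun w : V => c⁻¹ • w) h1
    simpa [smul_smul, inv_mul_cancel₀ hc0] using h2
  have h := congrArg (fun f : Module.End k V => f v) (hA g)
  simp only [LinearMap.comp_apply, LinearMap.smul_apply] at h
  rw [hAinv, map_smul, map_smul, hAc, smul_smul, inv_mul_cancel₀ hc0, one_smul] at h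
  -- h : ρ g v = η g • ρ g v
  have hρv : (ρ g : Module.End k V) v ≠ 0 := by
    intro h0
    apply hv
    apply endUnits_injective (ρ g)
    rw [h0, map_zero]
  have hsub : ((η g : k) - 1) • (ρ g : Module.End k V) v = 0 := by
    rw [sub_smul, one_smul, ← h, sub_self]
  have hval : (η g : k) = 1 := by
    rcases smul_eq_zero.mp hsub with h1 | h1
    · exact sub_eq_zero.mp h1
    · exact absurd h1 hρv
  exact Units.ext hval
end

section
/- Let k be an algebraically closed field, Γ a group, Δ a normal subgroup of Γ, V a nonzero finite-dimensional k-vector space, and r₁, r₂ : Γ →* GL(V) group homomorphisms with r₁(h) = r₂(h) for all h ∈ Δ. Suppose the restriction of r₂ to Δ is irreducible. Then there exists a character χ' : Γ →* kˣ with χ'(h) = 1 for all h ∈ Δ and r₁(g) = χ'(g) • r₂(g) for all g ∈ Γ. -/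
/-- First case of the proof of Lemma 5.3: if `r₁` and `r₂` agree on a normal subgroup `Δ`
and `r₂` restricted to `Δ` is irreducible, then `r₁` is a character twist of `r₂` by a
character trivial on `Δ` (Schur's lemma applied to `g_σ = r₂(σ)⁻¹ r₁(σ)`). -/
theorem eq_on_normal_subgroup_twist
    {k : Type*} [Field k] [IsAlgClosed k]
    {V : Type*} [AddCommGroup V] [Module k V] [FiniteDimensional k V] [Nontrivial V]
    {Γ : Type*} [Group Γ] (Δ : Subgroup Γ) [Δ.Normal]
    (r₁ r₂ : Γ →* (Module.End k V)ˣ)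
    (hagree : ∀ h ∈ Δ, r₁ h = r₂ h)
    (hirr : ∀ W : Submodule k V,
      (∀ h ∈ Δ, ∀ v ∈ W, (r₂ h : Module.End k V) v ∈ W) → W = ⊥ ∨ W = ⊤) :
    ∃ χ' : Γ →* kˣ, (∀ h ∈ Δ, χ' h = 1) ∧
      ∀ g : Γ, (r₁ g : Module.End k V) = (χ' g : k) • (r₂ g : Module.End k V) := by
  classical
  -- Step 1: existence of the scalar for each g
  have hex : ∀ g : Γ, ∃ c : k,
      (r₁ g : Module.End k V) = c • (r₂ g : Module.End k V) := by
    intro g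
    set T : Module.End k V := (((r₂ g)⁻¹ * r₁ g : (Module.End k V)ˣ) : Module.End k V) with hT
    -- T commutes with r₂ h for h ∈ Δ
    have hcomm : ∀ h ∈ Δ, ((r₂ g)⁻¹ * r₁ g) * r₂ h = r₂ h * ((r₂ g)⁻¹ * r₁ g) := by
      intro h hh
      have h1 : r₁ g * r₂ h * (r₁ g)⁻¹ = r₂ g * r₂ h * (r₂ g)⁻¹ := by
        have hmem : g * h * g⁻¹ ∈ Δ := Subgroup.Normal.conj_mem ‹Δ.Normal› h hh g
        have := hagree _ hmem
        rw [map_mul, map_mul, map_mul, map_mul, map_inv, map_inv, hagree h hh] at this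
        exact this
      have h2 : r₁ g * r₂ h = r₂ g * r₂ h * (r₂ g)⁻¹ * r₁ g := by
        rw [← h1]; group
      calc (r₂ g)⁻¹ * r₁ g * r₂ h = (r₂ g)⁻¹ * (r₁ g * r₂ h) := by group
        _ = (r₂ g)⁻¹ * (r₂ g * r₂ h * (r₂ g)⁻¹ * r₁ g) := by rw [h2]
        _ = r₂ h * ((r₂ g)⁻¹ * r₁ g) := by group
    -- T has an eigenvalue c
    obtain ⟨c, hc⟩ := Module.End.exists_eigenvalue T
    have hker : Module.End.eigenspace T c ≠ ⊥ := hc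
    -- eigenspace is invariant
    have hinv : ∀ h ∈ Δ, ∀ v ∈ Module.End.eigenspace T c,
        (r₂ h : Module.End k V) v ∈ Module.End.eigenspace T c := by
      intro h hh v hv
      rw [Module.End.mem_eigenspace_iff] at hv ⊢
      have hTcomm : T * (r₂ h : Module.End k V) = (r₂ h : Module.End k V) * T := by
        have := hcomm h hh
        have : (((r₂ g)⁻¹ * r₁ g) * r₂ h : (Module.End k V)ˣ)
            = (r₂ h * ((r₂ g)⁻¹ * r₁ g) : (Module.End k V)ˣ) := this
        rw [hT]
        exact_mod_cast congrArg (Units.val) this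
      calc T ((r₂ h : Module.End k V) v)
          = (T * (r₂ h : Module.End k V)) v := rfl
        _ = ((r₂ h : Module.End k V) * T) v := by rw [hTcomm]
        _ = (r₂ h : Module.End k V) (T v) := rfl
        _ = (r₂ h : Module.End k V) (c • v) := by rw [hv]
        _ = c • (r₂ h : Module.End k V) v := by rw [map_smul]
    have htop : Module.End.eigenspace T c = ⊤ :=
      ((hirr _ hinv).resolve_left hker)
    -- hence T = c • 1
    have hTc : T = c • (1 : Module.End k V) := by
      ext v
      have : v ∈ Module.End.eigenspace T c := htop ▸ Submodule.mem_top
      simpa [Module.End.mem_eigenspace_iff] using this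
    refine ⟨c, ?_⟩
    have : ((r₂ g : (Module.End k V)ˣ) : Module.End k V) * T = r₁ g := by
      have : (r₂ g * ((r₂ g)⁻¹ * r₁ g) : (Module.End k V)ˣ) = r₁ g := by group
      rw [hT]
      exact_mod_cast congrArg Units.val this
    rw [← this, hTc]
    ext v
    simp [mul_smul_comm]
  -- the scalar function
  let f : Γ → k := fun g => (hex g).choose
  have hf : ∀ g, (r₁ g : Module.End k V) = f g • (r₂ g : Module.End k V) :=
    fun g => (hex g).choose_spec
  -- uniqueness of the scalar
  obtain ⟨v, hv⟩ := exists_ne (0 : V)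
  have huniq : ∀ g : Γ, ∀ c c' : k,
      c • (r₂ g : Module.End k V) = c' • (r₂ g : Module.End k V) → c = c' := by
    intro g c c' h
    have hvne : (r₂ g : Module.End k V) v ≠ 0 := by
      intro h0
      apply hv
      have := congrArg (fun w => ((r₂ g)⁻¹ : (Module.End k V)ˣ).val w) h0
      simpa [← Module.End.mul_apply, ← Units.val_mul] using this
    have := congrArg (fun T : Module.End k V => T v) h
    simp only [LinearMap.smul_apply] at this
    exact smul_left_injective k hvne (by simpa using this)
  -- f g ≠ 0
  have hne : ∀ g, f g ≠ 0 := by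
    intro g h0
    have hvne : (r₁ g : Module.End k V) v ≠ 0 := by
      intro hz
      apply hv
      have := congrArg (fun w => ((r₁ g)⁻¹ : (Module.End k V)ˣ).val w) hz
      simpa [← Module.End.mul_apply, ← Units.val_mul] using this
    apply hvne
    have := congrArg (fun T : Module.End k V => T v) (hf g)
    simp [h0] at this
    exact this
  -- multiplicativity
  have hmul : ∀ g g' : Γ, f (g * g') = f g * f g' := by
    intro g g'
    apply huniq (g * g')
    rw [← hf (g * g')]
    have : (r₁ (g * g') : Module.End k V)
        = (r₁ g : Module.End k V) * (r₁ g' : Module.End k V) := by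
      rw [map_mul]; rfl
    rw [this, hf g, hf g', map_mul]
    push_cast
    rw [smul_mul_assoc, mul_smul_comm, smul_smul]
  have hone : f 1 = 1 := by
    apply huniq 1
    rw [← hf 1]
    simp
  have htriv : ∀ h ∈ Δ, f h = 1 := by
    intro h hh
    apply huniq h
    rw [← hf h, hagree h hh, one_smul]
  refine ⟨{ toFun := fun g => Units.mk0 (f g) (hne g),
            map_one' := by ext; simp [hone],
            map_mul' := by intro g g'; ext; simp [hmul] }, ?_, ?_⟩
  · intro h hh
    ext
    simp [htriv h hh]
  · intro g
    simpa using hf g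
end

section
/- Let k be a field of characteristic zero and V a finite-dimensional k-vector space with an internal direct sum decomposition V = T ⊕ P ⊕ N into subspaces T, P, N. Let θ : V →ₗ[k] V be a linear involution (θ ∘ θ = id) with θ(T) ⊆ T, θ(P) ⊆ N, θ(N) ⊆ P, and with trace of θ equal to −(dim_k T). Then: (i) θ restricted to T equals −id; and (ii) for every subspace W of V with θ(W) ⊆ W which is the internal direct sum W = (W ∩ T) ⊕ (W ∩ P) ⊕ (W ∩ N), the trace of the restriction of θ to W equals −dim_k(W ∩ T). -/
open LinearMap Submodule

section helpers

variable {k : Type*} [Field k] {V : Type*} [AddCommGroup V] [Module k V]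
  [FiniteDimensional k V]

lemma proj3_sum (A B C : Submodule k V)
    (hA : IsCompl A (B ⊔ C)) (hB : IsCompl B (A ⊔ C)) (hC : IsCompl C (A ⊔ B)) :
    (A.subtype ∘ₗ projectionOnto A (B ⊔ C) hA)
      + (B.subtype ∘ₗ projectionOnto B (A ⊔ C) hB)
      + (C.subtype ∘ₗ projectionOnto C (A ⊔ B) hC) = LinearMap.id := by
  set πA := A.subtype ∘ₗ projectionOnto A (B ⊔ C) hA with hπA
  set πB := B.subtype ∘ₗ projectionOnto B (A ⊔ C) hB with hπB
  set πC := C.subtype ∘ₗ projectionOnto C (A ⊔ B) hC with hπC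
  have hker : ⊤ ≤ LinearMap.ker (πA + πB + πC - LinearMap.id) := by
    rw [← hA.codisjoint.eq_top]
    refine sup_le (fun v hv => ?_) (sup_le (fun v hv => ?_) (fun v hv => ?_)) <;>
      simp only [LinearMap.mem_ker, LinearMap.sub_apply, LinearMap.add_apply, LinearMap.id_apply, hπA, hπB, hπC,
        comp_apply, Submodule.subtype_apply, sub_eq_zero]
    · rw [Submodule.projectionOnto_apply_left hA ⟨v, hv⟩,
        Submodule.projectionOnto_apply_of_mem_right hB (mem_sup_left hv),
        Submodule.projectionOnto_apply_of_mem_right hC (mem_sup_left hv)]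
      simp
    · rw [Submodule.projectionOnto_apply_left hB ⟨v, hv⟩,
        Submodule.projectionOnto_apply_of_mem_right hA (mem_sup_left hv),
        Submodule.projectionOnto_apply_of_mem_right hC (mem_sup_right hv)]
      simp
    · rw [Submodule.projectionOnto_apply_left hC ⟨v, hv⟩,
        Submodule.projectionOnto_apply_of_mem_right hA (mem_sup_right hv),
        Submodule.projectionOnto_apply_of_mem_right hB (mem_sup_right hv)]
      simp
  ext v
  have h := hker (Submodule.mem_top (x := v))
  rw [LinearMap.mem_ker, LinearMap.sub_apply, sub_eq_zero] at h
  exact h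

end helpers

section helpers2
set_option linter.unusedSectionVars false

variable {k : Type*} [Field k] {V : Type*} [AddCommGroup V] [Module k V]
  [FiniteDimensional k V]

/-- Off-diagonal and swapped blocks contribute nothing to the trace. -/
lemma trace_eq_trace_comp_proj (A B C : Submodule k V)
    (hA : IsCompl A (B ⊔ C)) (hB : IsCompl B (A ⊔ C)) (hC : IsCompl C (A ⊔ B))
    (θ : V →ₗ[k] V) (hθB : ∀ v ∈ B, θ v ∈ C) (hθC : ∀ v ∈ C, θ v ∈ B) :
    trace k V θ
      = trace k V (θ ∘ₗ (A.subtype ∘ₗ projectionOnto A (B ⊔ C) hA)) := by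
  set πA := A.subtype ∘ₗ projectionOnto A (B ⊔ C) hA with hπA
  set πB := B.subtype ∘ₗ projectionOnto B (A ⊔ C) hB with hπB
  set πC := C.subtype ∘ₗ projectionOnto C (A ⊔ B) hC with hπC
  have hsum : πA + πB + πC = LinearMap.id := proj3_sum A B C hA hB hC
  -- generic vanishing of products of distinct projections
  have hBA : πB ∘ₗ πA = 0 := by
    ext v
    simp only [comp_apply, Submodule.subtype_apply, LinearMap.zero_apply, hπA, hπB]
    rw [Submodule.projectionOnto_apply_of_mem_right hB
      (mem_sup_left (projectionOnto A (B ⊔ C) hA v).2)]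
    simp
  have hBC : πB ∘ₗ πC = 0 := by
    ext v
    simp only [comp_apply, Submodule.subtype_apply, LinearMap.zero_apply, hπC, hπB]
    rw [Submodule.projectionOnto_apply_of_mem_right hB
      (mem_sup_right (projectionOnto C (A ⊔ B) hC v).2)]
    simp
  have hCA : πC ∘ₗ πA = 0 := by
    ext v
    simp only [comp_apply, Submodule.subtype_apply, LinearMap.zero_apply, hπA, hπC]
    rw [Submodule.projectionOnto_apply_of_mem_right hC
      (mem_sup_left (projectionOnto A (B ⊔ C) hA v).2)]
    simp
  have hCB : πC ∘ₗ πB = 0 := by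
    ext v
    simp only [comp_apply, Submodule.subtype_apply, LinearMap.zero_apply, hπB, hπC]
    rw [Submodule.projectionOnto_apply_of_mem_right hC
      (mem_sup_right (projectionOnto B (A ⊔ C) hB v).2)]
    simp
  have hBθB : πB ∘ₗ (θ ∘ₗ πB) = 0 := by
    ext v
    simp only [comp_apply, Submodule.subtype_apply, LinearMap.zero_apply, hπB]
    rw [Submodule.projectionOnto_apply_of_mem_right hB
      (mem_sup_right (hθB _ (projectionOnto B (A ⊔ C) hB v).2))]
    simp
  have hCθC : πC ∘ₗ (θ ∘ₗ πC) = 0 := by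
    ext v
    simp only [comp_apply, Submodule.subtype_apply, LinearMap.zero_apply, hπC]
    rw [Submodule.projectionOnto_apply_of_mem_right hC
      (mem_sup_right (hθC _ (projectionOnto C (A ⊔ B) hC v).2))]
    simp
  have key : ∀ f : V →ₗ[k] V, trace k V f
      = trace k V (πA ∘ₗ f) + trace k V (πB ∘ₗ f) + trace k V (πC ∘ₗ f) := by
    intro f
    rw [← map_add, ← map_add, ← add_comp, ← add_comp, hsum, LinearMap.id_comp]
  have trB : trace k V (θ ∘ₗ πB) = 0 := by
    rw [key (θ ∘ₗ πB)]
    have e1 : trace k V (πA ∘ₗ (θ ∘ₗ πB)) = 0 := by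
      rw [← Module.End.mul_eq_comp, trace_mul_comm, Module.End.mul_eq_comp]
      show trace k V ((θ ∘ₗ πB) ∘ₗ πA) = 0
      rw [comp_assoc, hBA, comp_zero, map_zero]
    have e3 : trace k V (πC ∘ₗ (θ ∘ₗ πB)) = 0 := by
      rw [← Module.End.mul_eq_comp, trace_mul_comm, Module.End.mul_eq_comp]
      show trace k V ((θ ∘ₗ πB) ∘ₗ πC) = 0
      rw [comp_assoc, hBC, comp_zero, map_zero]
    rw [e1, e3, hBθB, map_zero]
    ring
  have trC : trace k V (θ ∘ₗ πC) = 0 := by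
    rw [key (θ ∘ₗ πC)]
    have e1 : trace k V (πA ∘ₗ (θ ∘ₗ πC)) = 0 := by
      rw [← Module.End.mul_eq_comp, trace_mul_comm, Module.End.mul_eq_comp]
      show trace k V ((θ ∘ₗ πC) ∘ₗ πA) = 0
      rw [comp_assoc, hCA, comp_zero, map_zero]
    have e2 : trace k V (πB ∘ₗ (θ ∘ₗ πC)) = 0 := by
      rw [← Module.End.mul_eq_comp, trace_mul_comm, Module.End.mul_eq_comp]
      show trace k V ((θ ∘ₗ πC) ∘ₗ πB) = 0
      rw [comp_assoc, hCB, comp_zero, map_zero]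
    rw [e1, e2, hCθC, map_zero]
    ring
  calc trace k V θ = trace k V (θ ∘ₗ (πA + πB + πC)) := by
        rw [hsum, LinearMap.comp_id]
    _ = trace k V (θ ∘ₗ πA) + trace k V (θ ∘ₗ πB) + trace k V (θ ∘ₗ πC) := by
        rw [comp_add, comp_add, map_add, map_add]
    _ = trace k V (θ ∘ₗ πA) := by rw [trB, trC]; ring

end helpers2

section helpers3
set_option linter.unusedSectionVars false

variable {k : Type*} [Field k] {V : Type*} [AddCommGroup V] [Module k V]
  [FiniteDimensional k V]

lemma trace_eq_neg_finrank (A B C : Submodule k V)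
    (hA : IsCompl A (B ⊔ C)) (hB : IsCompl B (A ⊔ C)) (hC : IsCompl C (A ⊔ B))
    (θ : V →ₗ[k] V) (hθA : ∀ v ∈ A, θ v = -v)
    (hθB : ∀ v ∈ B, θ v ∈ C) (hθC : ∀ v ∈ C, θ v ∈ B) :
    trace k V θ = -(Module.finrank k A : k) := by
  rw [trace_eq_trace_comp_proj A B C hA hB hC θ hθB hθC]
  set πA := A.subtype ∘ₗ projectionOnto A (B ⊔ C) hA with hπA
  have hneg : θ ∘ₗ πA = -πA := by
    ext v
    simp only [comp_apply, LinearMap.neg_apply, hπA, Submodule.subtype_apply]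
    exact hθA _ (projectionOnto A (B ⊔ C) hA v).2
  have hproj : LinearMap.IsProj A πA :=
    ⟨fun v => (projectionOnto A (B ⊔ C) hA v).2,
     fun x hx => by
      simp only [hπA, comp_apply, Submodule.subtype_apply]
      rw [Submodule.projectionOnto_apply_left hA ⟨x, hx⟩]⟩
  rw [hneg, map_neg, hproj.trace]

end helpers3

/-- Linear-algebra core of Lemma 2.2 (oddness passes to reductive subgroups):
if `V = T ⊕ P ⊕ N`, `θ` is an involution preserving `T` and swapping `P` and `N`,
and `tr θ = -dim T`, then `θ = -1` on `T`, and for any `θ`-invariant subspace `W`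
compatible with the decomposition, `tr (θ|_W) = -dim (W ∩ T)`. -/
theorem odd_involution_restricts
    {k : Type*} [Field k] [CharZero k]
    {V : Type*} [AddCommGroup V] [Module k V] [FiniteDimensional k V]
    (T P N : Submodule k V) (hint : DirectSum.IsInternal ![T, P, N])
    (θ : V →ₗ[k] V) (hinv : θ ∘ₗ θ = LinearMap.id)
    (hT : ∀ v ∈ T, θ v ∈ T) (hP : ∀ v ∈ P, θ v ∈ N) (hN : ∀ v ∈ N, θ v ∈ P)
    (htr : LinearMap.trace k V θ = -(Module.finrank k T : k)) :
    (∀ v ∈ T, θ v = -v) ∧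
      ∀ (W : Submodule k V) (hW : ∀ v ∈ W, θ v ∈ W),
        (W ⊓ T) ⊔ (W ⊓ P) ⊔ (W ⊓ N) = W →
        LinearMap.trace k W (θ.restrict hW) = -(Module.finrank k ↥(W ⊓ T) : k) := by
  have hind := hint.submodule_iSupIndep
  have htop : T ⊔ (P ⊔ N) = ⊤ := by
    rw [← hint.submodule_iSup_eq_top]
    apply le_antisymm
    · exact sup_le (le_iSup_of_le 0 (by simp)) (sup_le (le_iSup_of_le 1 (by simp))
        (le_iSup_of_le 2 (by simp)))
    · refine iSup_le fun i => ?_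
      fin_cases i
      · exact le_sup_left
      · exact le_sup_of_le_right le_sup_left
      · exact le_sup_of_le_right le_sup_right
  have hdT : Disjoint T (P ⊔ N) := by
    refine (hind 0).mono_right (sup_le ?_ ?_)
    · exact le_iSup₂_of_le 1 (by decide) (by simp)
    · exact le_iSup₂_of_le 2 (by decide) (by simp)
  have hdP : Disjoint P (T ⊔ N) := by
    refine (hind 1).mono_right (sup_le ?_ ?_)
    · exact le_iSup₂_of_le 0 (by decide) (by simp)
    · exact le_iSup₂_of_le 2 (by decide) (by simp)
  have hdN : Disjoint N (T ⊔ P) := by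
    refine (hind 2).mono_right (sup_le ?_ ?_)
    · exact le_iSup₂_of_le 0 (by decide) (by simp)
    · exact le_iSup₂_of_le 1 (by decide) (by simp)
  have hcT : IsCompl T (P ⊔ N) := ⟨hdT, codisjoint_iff.mpr htop⟩
  have hcP : IsCompl P (T ⊔ N) := ⟨hdP, codisjoint_iff.mpr (by rw [sup_left_comm]; exact htop)⟩
  have hcN : IsCompl N (T ⊔ P) :=
    ⟨hdN, codisjoint_iff.mpr (by rw [sup_comm, sup_assoc]; exact htop)⟩
  set r : T →ₗ[k] T := θ.restrict hT with hr
  -- trace of θ restricted to T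
  have htrT : LinearMap.trace k T r = -(Module.finrank k T : k) := by
    have h1 := trace_eq_trace_comp_proj T P N hcT hcP hcN θ hP hN
    have h2 : θ ∘ₗ (T.subtype ∘ₗ projectionOnto T (P ⊔ N) hcT)
        = T.subtype ∘ₗ (r ∘ₗ projectionOnto T (P ⊔ N) hcT) := by
      ext v
      simp [hr, LinearMap.restrict_coe_apply]
    rw [h1, h2, trace_comp_comm', comp_assoc, Submodule.projectionOnto_comp_subtype,
      comp_id] at htr
    exact htr
  -- r is an involution
  have hrr : r * r = 1 := by
    ext x
    have h := LinearMap.ext_iff.mp hinv (x : V)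
    simp only [comp_apply, LinearMap.id_apply] at h
    simpa [hr, Module.End.mul_apply, Module.End.one_apply,
      LinearMap.restrict_coe_apply] using h
  -- the idempotent (1 + r)/2 has trace 0, hence is 0
  set φ : Module.End k T := (2:k)⁻¹ • (1 + r) with hφ
  have hidem : φ ∘ₗ φ = φ := by
    show φ * φ = φ
    rw [hφ, smul_mul_assoc, mul_smul_comm, add_mul, one_mul, mul_add, mul_one, hrr]
    rw [show (1 + r) + (r + 1) = (2:k) • (1 + r) by
      rw [two_smul]; abel]
    rw [smul_smul, smul_smul, show (2:k)⁻¹ * (2:k)⁻¹ * 2 = (2:k)⁻¹ by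
      field_simp]
  obtain ⟨p, hp⟩ := (LinearMap.isProj_iff_isIdempotentElem φ).mpr hidem
  have htrφ : LinearMap.trace k T φ = 0 := by
    rw [hφ, map_smul, map_add, trace_one]
    show (2:k)⁻¹ * ((Module.finrank k T : k) + LinearMap.trace k T r) = 0
    rw [htrT]
    ring
  have hp0 : p = ⊥ := by
    have : (Module.finrank k p : k) = 0 := by rw [← hp.trace, htrφ]
    exact Submodule.finrank_eq_zero.mp (Nat.cast_eq_zero.mp this)
  have hφ0 : φ = 0 := by
    ext x
    have hm := hp.map_mem x
    rw [hp0, Submodule.mem_bot] at hm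
    simp [hm]
  have hneg : ∀ v ∈ T, θ v = -v := by
    intro v hv
    have hx : φ ⟨v, hv⟩ = 0 := by rw [hφ0]; rfl
    rw [hφ] at hx
    simp only [LinearMap.smul_apply, LinearMap.add_apply, Module.End.one_apply, smul_eq_zero,
      inv_eq_zero] at hx
    rcases hx with h | h
    · exact absurd h two_ne_zero
    · have hrx : r ⟨v, hv⟩ = -⟨v, hv⟩ := by
        have := eq_neg_of_add_eq_zero_right h
        exact this
      calc θ v = ↑(r ⟨v, hv⟩) := (LinearMap.restrict_coe_apply θ hT ⟨v, hv⟩).symm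
        _ = -v := by rw [hrx]; rfl
  refine ⟨hneg, fun W hW hsupW => ?_⟩
  set A' := T.comap W.subtype with hA'
  set B' := P.comap W.subtype with hB'
  set C' := N.comap W.subtype with hC'
  have hdisj : ∀ X Y Z : Submodule k V, Disjoint X (Y ⊔ Z) →
      Disjoint (X.comap W.subtype) (Y.comap W.subtype ⊔ Z.comap W.subtype) := by
    intro X Y Z h
    rw [disjoint_iff] at h ⊢
    refine le_bot_iff.mp ?_
    calc X.comap W.subtype ⊓ (Y.comap W.subtype ⊔ Z.comap W.subtype)
        ≤ X.comap W.subtype ⊓ (Y ⊔ Z).comap W.subtype :=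
          inf_le_inf_left _ (sup_le (comap_mono le_sup_left) (comap_mono le_sup_right))
      _ = (X ⊓ (Y ⊔ Z)).comap W.subtype := (comap_inf _ _ _).symm
      _ = ⊥ := by rw [h, comap_bot, ker_subtype]
  have hmap : ∀ X : Submodule k V, map W.subtype (X.comap W.subtype) = W ⊓ X :=
    fun X => map_comap_subtype W X
  have hsup' : A' ⊔ (B' ⊔ C') = ⊤ := by
    apply map_injective_of_injective (injective_subtype W)
    rw [Submodule.map_sup, Submodule.map_sup, hmap, hmap, hmap, Submodule.map_top, range_subtype,
      ← sup_assoc, hsupW]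
  have hcA' : IsCompl A' (B' ⊔ C') := ⟨hdisj T P N hdT, codisjoint_iff.mpr hsup'⟩
  have hcB' : IsCompl B' (A' ⊔ C') :=
    ⟨hdisj P T N hdP, codisjoint_iff.mpr (by rw [sup_left_comm]; exact hsup')⟩
  have hcC' : IsCompl C' (A' ⊔ B') :=
    ⟨hdisj N T P hdN, codisjoint_iff.mpr (by rw [sup_comm, sup_assoc]; exact hsup')⟩
  have hθ'A : ∀ v ∈ A', θ.restrict hW v = -v := by
    intro v hv
    exact Subtype.ext (by
      rw [LinearMap.restrict_coe_apply]
      exact hneg _ hv)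
  have hθ'B : ∀ v ∈ B', θ.restrict hW v ∈ C' := by
    intro v hv
    rw [hB', Submodule.mem_comap, Submodule.subtype_apply] at hv
    rw [hC', Submodule.mem_comap, Submodule.subtype_apply, LinearMap.restrict_coe_apply]
    exact hP _ hv
  have hθ'C : ∀ v ∈ C', θ.restrict hW v ∈ B' := by
    intro v hv
    rw [hC', Submodule.mem_comap, Submodule.subtype_apply] at hv
    rw [hB', Submodule.mem_comap, Submodule.subtype_apply, LinearMap.restrict_coe_apply]
    exact hN _ hv
  rw [trace_eq_neg_finrank A' B' C' hcA' hcB' hcC' (θ.restrict hW) hθ'A hθ'B hθ'C]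
  have hA'eq : A' = (W ⊓ T).comap W.subtype := by
    rw [hA', comap_inf, comap_subtype_self, top_inf_eq]
  have hfr : Module.finrank k A' = Module.finrank k ↥(W ⊓ T) := by
    rw [hA'eq]
    exact (Submodule.comapSubtypeEquivOfLe inf_le_left).finrank_eq
  rw [hfr]
end
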